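/- In U_q^+(so_5), the element z := (1−q²)E1E3 + q²(q+q⁻¹)E4 is central, where E3 = E1E2 − q⁻²E2E1 and E4 = (q+q⁻¹)⁻¹(E1²E2 − q⁻¹(q+q⁻¹)E1E2E1 + q⁻²E2E1²). -/

import Mathlib

noncomputable section

open FreeAlgebra

/-- The quantum Serre relations of type B₂ defining `U_q⁺(so₅)`. -/
inductive so5Rel (q : ℂ) : FreeAlgebra ℂ (Fin 2) → FreeAlgebra ℂ (Fin 2) → Prop
  | serre1 : so5Rel q
      (ι ℂ 0 * ι ℂ 0 * ι ℂ 0 * ι ℂ 1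
        - (q ^ 2 + 1 + (q ^ 2)⁻¹) • (ι ℂ 0 * ι ℂ 0 * ι ℂ 1 * ι ℂ 0)
        + (q ^ 2 + 1 + (q ^ 2)⁻¹) • (ι ℂ 0 * ι ℂ 1 * ι ℂ 0 * ι ℂ 0)
        - ι ℂ 1 * ι ℂ 0 * ι ℂ 0 * ι ℂ 0) 0
  | serre2 : so5Rel q
      (ι ℂ 1 * ι ℂ 1 * ι ℂ 0 - (q ^ 2 + (q ^ 2)⁻¹) • (ι ℂ 1 * ι ℂ 0 * ι ℂ 1)
        + ι ℂ 0 * ι ℂ 1 * ι ℂ 1) 0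

/-- `U_q⁺(so₅)`. -/
abbrev UqB2 (q : ℂ) := RingQuot (so5Rel q)

def F₁ (q : ℂ) : UqB2 q := RingQuot.mkAlgHom ℂ (so5Rel q) (ι ℂ 0)
def F₂ (q : ℂ) : UqB2 q := RingQuot.mkAlgHom ℂ (so5Rel q) (ι ℂ 1)

/-- The root vector `E₃ = E₁E₂ - q⁻²E₂E₁`. -/
def F₃ (q : ℂ) : UqB2 q := F₁ q * F₂ q - (q ^ 2)⁻¹ • (F₂ q * F₁ q)

/-- The root vector `E₄ = (q+q⁻¹)⁻¹ (E₁²E₂ - q⁻¹(q+q⁻¹)E₁E₂E₁ + q⁻²E₂E₁²)`. -/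
def F₄ (q : ℂ) : UqB2 q :=
  (q + q⁻¹)⁻¹ • (F₁ q * F₁ q * F₂ q - (q⁻¹ * (q + q⁻¹)) • (F₁ q * F₂ q * F₁ q)
    + (q ^ 2)⁻¹ • (F₂ q * F₁ q * F₁ q))

/-- The central element `z = (1-q²)E₁E₃ + q²(q+q⁻¹)E₄`. -/
def zB2 (q : ℂ) : UqB2 q := (1 - q ^ 2) • (F₁ q * F₃ q) + (q ^ 2 * (q + q⁻¹)) • F₄ q

/-- The central element `z' = -(q²-q⁻²)(q+q⁻¹)E₄E₂ + q²(q²-1)E₃²`. -/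
def z'B2 (q : ℂ) : UqB2 q :=
  (-((q ^ 2 - (q ^ 2)⁻¹) * (q + q⁻¹))) • (F₄ q * F₂ q) + (q ^ 2 * (q ^ 2 - 1)) • (F₃ q ^ 2)

set_option maxHeartbeats 1000000 in
theorem stmt9 (q : ℂ) (hq : q ≠ 0) (hq' : ∀ n : ℕ, 0 < n → q ^ n ≠ 1) :
    ∀ x : UqB2 q, zB2 q * x = x * zB2 q := by
  have hq21 : q ^ 2 + 1 ≠ 0 := fun h => hq' 4 (by norm_num) (by linear_combination (q^2-1)*h)
  have hqq : q + q⁻¹ ≠ 0 := by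
    have h : q + q⁻¹ = (q ^ 2 + 1) * q⁻¹ := by field_simp
    rw [h]; exact mul_ne_zero hq21 (inv_ne_zero hq)
  have hA : (1:ℂ) + q ^ 2 ≠ 0 := by rw [add_comm]; exact hq21
  have hB : q ^ 2 + q ^ 4 ≠ 0 := by
    have h : q ^ 2 + q ^ 4 = q ^ 2 * (1 + q ^ 2) := by ring
    rw [h]; exact mul_ne_zero (pow_ne_zero _ hq) hA
  have hC : q * q + 1 ≠ 0 := by
    have h : q * q + 1 = q ^ 2 + 1 := by ring
    rw [h]; exact hq21
  have hD : q * q ≠ 0 := mul_ne_zero hq hq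
  have hF1 : RingQuot.mkAlgHom ℂ (so5Rel q) (ι ℂ 0) = F₁ q := rfl
  have hF2 : RingQuot.mkAlgHom ℂ (so5Rel q) (ι ℂ 1) = F₂ q := rfl
  have h1 : F₁ q * (F₁ q * (F₁ q * F₂ q))
      - (q ^ 2 + 1 + (q ^ 2)⁻¹) • (F₁ q * (F₁ q * (F₂ q * F₁ q)))
      + (q ^ 2 + 1 + (q ^ 2)⁻¹) • (F₁ q * (F₂ q * (F₁ q * F₁ q)))
      - F₂ q * (F₁ q * (F₁ q * F₁ q)) = 0 := by
    have := RingQuot.mkAlgHom_rel ℂ (so5Rel.serre1 (q := q))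
    simpa only [map_sub, map_add, map_smul, map_mul, map_zero, hF1, hF2, mul_assoc] using this
  have h2 : F₂ q * (F₂ q * F₁ q) - (q ^ 2 + (q ^ 2)⁻¹) • (F₂ q * (F₁ q * F₂ q))
      + F₁ q * (F₂ q * F₂ q) = 0 := by
    have := RingQuot.mkAlgHom_rel ℂ (so5Rel.serre2 (q := q))
    simpa only [map_sub, map_add, map_smul, map_mul, map_zero, hF1, hF2, mul_assoc] using this
  have hz : zB2 q = F₁ q * (F₁ q * F₂ q) - (q ^ 2 + (q ^ 2)⁻¹) • (F₁ q * (F₂ q * F₁ q))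
      + F₂ q * (F₁ q * F₁ q) := by
    rw [zB2, F₃, F₄]
    simp only [smul_add, smul_sub, smul_smul, mul_add, mul_sub, smul_mul_assoc,
      mul_smul_comm, mul_assoc]
    match_scalars <;> (field_simp; try ring)
  have e1 : zB2 q * F₁ q - F₁ q * zB2 q = (-1 : ℂ) •
      (F₁ q * (F₁ q * (F₁ q * F₂ q))
      - (q ^ 2 + 1 + (q ^ 2)⁻¹) • (F₁ q * (F₁ q * (F₂ q * F₁ q)))
      + (q ^ 2 + 1 + (q ^ 2)⁻¹) • (F₁ q * (F₂ q * (F₁ q * F₁ q)))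
      - F₂ q * (F₁ q * (F₁ q * F₁ q))) := by
    rw [hz]
    simp only [smul_add, smul_sub, smul_smul, mul_add, add_mul, mul_sub, sub_mul,
      smul_mul_assoc, mul_smul_comm, mul_assoc]
    match_scalars <;> (field_simp; try ring)
  have e2 : zB2 q * F₂ q - F₂ q * zB2 q =
      F₁ q * (F₂ q * (F₂ q * F₁ q) - (q ^ 2 + (q ^ 2)⁻¹) • (F₂ q * (F₁ q * F₂ q))
        + F₁ q * (F₂ q * F₂ q))
      - (F₂ q * (F₂ q * F₁ q) - (q ^ 2 + (q ^ 2)⁻¹) • (F₂ q * (F₁ q * F₂ q))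
        + F₁ q * (F₂ q * F₂ q)) * F₁ q := by
    rw [hz]
    simp only [smul_add, smul_sub, smul_smul, mul_add, add_mul, mul_sub, sub_mul,
      smul_mul_assoc, mul_smul_comm, mul_assoc]
    match_scalars <;> (field_simp; try ring)
  have key1 : zB2 q * F₁ q = F₁ q * zB2 q := by
    rw [h1, smul_zero] at e1; exact sub_eq_zero.mp e1
  have key2 : zB2 q * F₂ q = F₂ q * zB2 q := by
    rw [h2, mul_zero, zero_mul, sub_zero] at e2; exact sub_eq_zero.mp e2
  intro x
  obtain ⟨y, rfl⟩ := RingQuot.mkAlgHom_surjective ℂ (so5Rel q) x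
  induction y using FreeAlgebra.induction with
  | grade0 r => simp [AlgHom.commutes, Algebra.commutes]
  | grade1 i =>
      fin_cases i
      · exact key1
      · exact key2
  | mul x y hx hy => rw [map_mul, ← mul_assoc, hx, mul_assoc, hy, mul_assoc]
  | add x y hx hy => rw [map_add, mul_add, add_mul, hx, hy]
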